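/- arXiv:0808.0298 — 5 statements merged into one kernel-verified Lean document; each statement's English description precedes it below -/
import Mathlib

section
/- Let ν be a coalitional game on n players (n ≥ 1), and let ε₁ = min over imputations p of max_{S ⊆ I} (ν(S) − p(S)). Then for every ε ∈ ℝ, the ε-core of ν is nonempty if and only if ε ≥ ε₁. In particular the ε₁-core (the least core) is nonempty. -/
/-- Let `ε₁` be the minimum, over all imputations `p`, of the maximum
deficit `max_{S ⊆ I} (ν S - p(S))`. Then for every `ε`, the `ε`-core is nonempty iff
`ε ≥ ε₁`. In particular the `ε₁`-core (the least core) is nonempty. -/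
theorem eps_core_nonempty_iff_le
    (n : ℕ) (hn : 1 ≤ n) (ν : Finset (Fin n) → ℝ)
    (Imp : Set (Fin n → ℝ))
    (hImp : Imp = {p | (∀ i, 0 ≤ p i) ∧ ∑ i, p i = ν Finset.univ})
    (maxDef : (Fin n → ℝ) → ℝ)
    (hmaxDef : maxDef = fun p =>
      Finset.univ.sup' Finset.univ_nonempty (fun S : Finset (Fin n) => ν S - ∑ i ∈ S, p i))
    (ε₁ : ℝ)
    (hmin : IsLeast (maxDef '' Imp) ε₁) :
    ∀ ε : ℝ,
      ({p ∈ Imp | ∀ S : Finset (Fin n), ν S - ε ≤ ∑ i ∈ S, p i}.Nonempty ↔ ε₁ ≤ ε) := by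
  intro ε
  constructor
  · rintro ⟨p, hpImp, hp⟩
    have h1 : ε₁ ≤ maxDef p := hmin.2 ⟨p, hpImp, rfl⟩
    have h2 : maxDef p ≤ ε := by
      rw [hmaxDef]
      apply Finset.sup'_le
      intro S _
      linarith [hp S]
    linarith
  · intro hε
    obtain ⟨p, hpImp, hp⟩ := hmin.1
    refine ⟨p, hpImp, fun S => ?_⟩
    have : ν S - ∑ i ∈ S, p i ≤ maxDef p := by
      rw [hmaxDef]
      exact Finset.le_sup' (fun S : Finset (Fin n) => ν S - ∑ i ∈ S, p i) (Finset.mem_univ S)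
    rw [hp] at this
    linarith
end

section
/- Let ν be a coalitional game on n players. The set {ε ∈ ℝ : the ε-core of ν is nonempty} is a closed subset of ℝ. -/
/-- Continuity of a finite `sup'` of continuous real-valued functions. -/
lemma continuous_finset_sup'_aux {α ι : Type*} [TopologicalSpace α]
    (s : Finset ι) (hs : s.Nonempty) (g : ι → α → ℝ)
    (hg : ∀ i, Continuous (g i)) :
    Continuous fun p => s.sup' hs (fun i => g i p) := by
  induction hs using Finset.Nonempty.cons_induction with
  | singleton a => simp only [Finset.sup'_singleton]; exact hg a
  | cons a s ha hs ih =>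
      simp only [Finset.sup'_cons hs]
      exact (hg a).max ih

/-- For a coalitional game `ν`, the set of `ε ∈ ℝ` for which the
`ε`-core is nonempty is closed. -/
theorem eps_core_nonempty_set_isClosed
    (n : ℕ) (ν : Finset (Fin n) → ℝ) :
    IsClosed {ε : ℝ | ∃ p : Fin n → ℝ, (∀ i, 0 ≤ p i) ∧ (∑ i, p i = ν Finset.univ) ∧
      ∀ S : Finset (Fin n), ν S - ε ≤ ∑ i ∈ S, p i} := by
  classical
  set K : Set (Fin n → ℝ) :=
    {p | (∀ i, 0 ≤ p i) ∧ ∑ i, p i = ν Finset.univ} with hKdef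
  by_cases hK : K.Nonempty
  · -- K is compact
    have hKclosed : IsClosed K := by
      have h1 : IsClosed {p : Fin n → ℝ | ∀ i, 0 ≤ p i} := by
        have : {p : Fin n → ℝ | ∀ i, 0 ≤ p i} = ⋂ i, {p | 0 ≤ p i} := by
          ext p; simp
        rw [this]
        exact isClosed_iInter fun i =>
          isClosed_le continuous_const (continuous_apply i)
      have h2 : IsClosed {p : Fin n → ℝ | ∑ i, p i = ν Finset.univ} :=
        isClosed_eq (by continuity) continuous_const
      exact h1.inter h2
    have hKsub : K ⊆ Set.Icc (fun _ => (0:ℝ)) (fun _ => ν Finset.univ) := by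
      rintro p ⟨h0, hsum⟩
      constructor
      · intro i; exact h0 i
      · intro i
        calc p i ≤ ∑ j, p j := Finset.single_le_sum (fun j _ => h0 j) (Finset.mem_univ i)
        _ = ν Finset.univ := hsum
    have hKcompact : IsCompact K :=
      IsCompact.of_isClosed_subset isCompact_Icc hKclosed hKsub
    have hUnivNe : (Finset.univ : Finset (Finset (Fin n))).Nonempty :=
      ⟨∅, Finset.mem_univ _⟩
    set f : (Fin n → ℝ) → ℝ :=
      fun p => Finset.univ.sup' hUnivNe (fun S => ν S - ∑ i ∈ S, p i) with hfdef
    have hf : Continuous f := by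
      apply continuous_finset_sup'_aux
      intro S
      exact continuous_const.sub (by continuity)
    obtain ⟨p₀, hp₀K, hp₀min⟩ := hKcompact.exists_isMinOn hK hf.continuousOn
    have hset : {ε : ℝ | ∃ p : Fin n → ℝ, (∀ i, 0 ≤ p i) ∧ (∑ i, p i = ν Finset.univ) ∧
        ∀ S : Finset (Fin n), ν S - ε ≤ ∑ i ∈ S, p i} = Set.Ici (f p₀) := by
      ext ε
      simp only [Set.mem_setOf_eq, Set.mem_Ici]
      constructor
      · rintro ⟨p, h0, hsum, hS⟩
        have hpK : p ∈ K := ⟨h0, hsum⟩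
        have h1 : f p₀ ≤ f p := hp₀min hpK
        have h2 : f p ≤ ε := by
          apply Finset.sup'_le
          intro S _
          linarith [hS S]
        linarith
      · intro hε
        refine ⟨p₀, hp₀K.1, hp₀K.2, fun S => ?_⟩
        have : ν S - ∑ i ∈ S, p₀ i ≤ f p₀ :=
          Finset.le_sup' (fun S => ν S - ∑ i ∈ S, p₀ i) (Finset.mem_univ S)
        linarith
    rw [hset]
    exact isClosed_Ici
  · have hset : {ε : ℝ | ∃ p : Fin n → ℝ, (∀ i, 0 ≤ p i) ∧ (∑ i, p i = ν Finset.univ) ∧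
        ∀ S : Finset (Fin n), ν S - ε ≤ ∑ i ∈ S, p i} = ∅ := by
      ext ε
      simp only [Set.mem_setOf_eq, Set.mem_empty_iff_false, iff_false]
      rintro ⟨p, h0, hsum, -⟩
      exact hK ⟨p, h0, hsum⟩
    rw [hset]
    exact isClosed_empty
end

section
/- Let ν be a simple game on n players. If the core of ν is nonempty, then ν has a veto player, i.e. there exists a player i ∈ I such that i ∈ S for every winning coalition S. -/
/-- In a simple game `ν`, if the core is nonempty then there is a veto
player: a player `i` belonging to every winning coalition. -/
theorem veto_player_of_core_nonempty
    (n : ℕ) (ν : Finset (Fin n) → ℝ)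
    (hsimple : ∀ S : Finset (Fin n), ν S = 0 ∨ ν S = 1)
    (hgrand : ν Finset.univ = 1)
    (hcore : ∃ p : Fin n → ℝ, (∀ i, 0 ≤ p i) ∧ (∑ i, p i = ν Finset.univ) ∧
      ∀ S : Finset (Fin n), ν S ≤ ∑ i ∈ S, p i) :
    ∃ i : Fin n, ∀ S : Finset (Fin n), ν S = 1 → i ∈ S := by
  obtain ⟨p, hp0, hpsum, hpS⟩ := hcore
  rw [hgrand] at hpsum
  -- there is i with p i > 0
  have hex : ∃ i : Fin n, 0 < p i := by
    by_contra h
    push_neg at h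
    have : ∑ i, p i = 0 := Finset.sum_eq_zero fun i _ => le_antisymm (h i) (hp0 i)
    rw [hpsum] at this; norm_num at this
  obtain ⟨i, hi⟩ := hex
  refine ⟨i, fun S hS => ?_⟩
  by_contra hiS
  have h1 : (1 : ℝ) ≤ ∑ j ∈ S, p j := by rw [← hS]; exact hpS S
  have h2 : ∑ j ∈ S, p j + p i ≤ ∑ j, p j := by
    have : ∑ j ∈ insert i S, p j ≤ ∑ j, p j :=
      Finset.sum_le_sum_of_subset_of_nonneg (Finset.subset_univ _)
        (fun j _ _ => hp0 j)
    rwa [Finset.sum_insert hiS, add_comm] at this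
  rw [hpsum] at h2
  linarith
end

section
/- Let ν be a coalitional game on n players (n ≥ 1). There exists an imputation η whose nonincreasingly sorted vector of deficits (ν(S) − η(S))_{S ⊆ I} is lexicographically less than or equal to the nonincreasingly sorted deficit vector of every imputation; i.e. the nucleolus is well-defined. -/
/-- The deficits `ν S - p(S)` of all `2ⁿ` coalitions, sorted in nonincreasing order. -/
noncomputable def sortedDeficitVector (n : ℕ) (ν : Finset (Fin n) → ℝ)
    (p : Fin n → ℝ) : List ℝ :=
  Multiset.sort
    ((Finset.univ.val : Multiset (Finset (Fin n))).map (fun S => ν S - ∑ i ∈ S, p i)) (· ≥ ·)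

/-- `l₁` is lexicographically less than or equal to `l₂`. -/
def LexLE (l₁ l₂ : List ℝ) : Prop := l₁ = l₂ ∨ List.Lex (· < ·) l₁ l₂

/-- inf' with a default value for the empty set. -/
noncomputable def infD {α : Type*} (T : Finset α) (f : α → ℝ) : ℝ :=
  if h : T.Nonempty then T.inf' h f else 0

lemma infD_pos {α : Type*} {T : Finset α} (h : T.Nonempty) (f : α → ℝ) :
    infD T f = T.inf' h f := dif_pos h

/-- The j-th entry of the sorted deficit vector (0 beyond the end). -/
noncomputable def gD (n : ℕ) (ν : Finset (Fin n) → ℝ) (j : ℕ) (p : Fin n → ℝ) : ℝ :=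
  (sortedDeficitVector n ν p).getD j 0

lemma sdv_length (n : ℕ) (ν : Finset (Fin n) → ℝ) (p : Fin n → ℝ) :
    (sortedDeficitVector n ν p).length = 2 ^ n := by
  simp [sortedDeficitVector, Multiset.length_sort]

/-- max-min characterization on `Fin m` of the j-th largest value of a monotone tuple. -/
lemma minmax_fin (m j : ℕ) (hj : j < m) (h : Fin m → ℝ) (hmono : Monotone h)
    (hP : ((Finset.univ : Finset (Fin m)).powersetCard (j+1)).Nonempty) :
    ((Finset.univ : Finset (Fin m)).powersetCard (j+1)).sup' hP (fun A => infD A h)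
      = h ⟨m - 1 - j, by omega⟩ := by
  apply le_antisymm
  · apply Finset.sup'_le
    intro A hA
    rw [Finset.mem_powersetCard_univ] at hA
    have hAne : A.Nonempty := Finset.card_pos.mp (by omega)
    rw [infD_pos hAne]
    have hex : ∃ k ∈ A, (k : ℕ) ≤ m - 1 - j := by
      by_contra hc
      push_neg at hc
      have hsub : A ⊆ Finset.Ioi (⟨m - 1 - j, by omega⟩ : Fin m) := by
        intro k hk
        rw [Finset.mem_Ioi]
        exact Fin.lt_def.mpr (hc k hk)
      have := Finset.card_le_card hsub
      rw [Fin.card_Ioi] at this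
      simp only [Fin.val_mk] at this
      omega
    obtain ⟨k, hkA, hk⟩ := hex
    exact le_trans (Finset.inf'_le _ hkA) (hmono (Fin.le_def.mpr hk))
  · set a : Fin m := ⟨m - 1 - j, by omega⟩ with ha
    have hmem : Finset.Ici a ∈ (Finset.univ : Finset (Fin m)).powersetCard (j+1) := by
      rw [Finset.mem_powersetCard_univ, Fin.card_Ici]
      simp only [ha, Fin.val_mk]
      omega
    have h1 : h a ≤ infD (Finset.Ici a) h := by
      rw [infD_pos ⟨a, Finset.mem_Ici.mpr le_rfl⟩]
      exact Finset.le_inf' _ _ (fun k hk => hmono (Finset.mem_Ici.mp hk))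
    exact h1.trans (Finset.le_sup' (fun A => infD A h) hmem)


lemma infD_map_equiv {α β : Type*} (e : α ≃ β) (A : Finset α) (f : β → ℝ) :
    infD (A.map e.toEmbedding) f = infD A (f ∘ e) := by
  rcases A.eq_empty_or_nonempty with h | h
  · simp [h, infD]
  · rw [infD_pos (by simpa using h), infD_pos h, Finset.inf'_map]
    rfl

lemma powP_nonempty (n j : ℕ) (hj : j < 2 ^ n) :
    ((Finset.univ : Finset (Finset (Fin n))).powersetCard (j+1)).Nonempty := by
  apply Finset.powersetCard_nonempty.mpr
  rw [Finset.card_univ, Fintype.card_finset, Fintype.card_fin]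
  omega

lemma card_finset_fin (n : ℕ) : Fintype.card (Finset (Fin n)) = 2 ^ n := by
  rw [Fintype.card_finset, Fintype.card_fin]

/-- the j-th entry of the sorted deficit vector is the max over (j+1)-coalition-families
of the min deficit. -/
lemma gD_eq (n : ℕ) (ν : Finset (Fin n) → ℝ) (j : ℕ) (hj : j < 2 ^ n) (p : Fin n → ℝ) :
    gD n ν j p = ((Finset.univ : Finset (Finset (Fin n))).powersetCard (j+1)).sup'
      (powP_nonempty n j hj) (fun T => infD T (fun S => ν S - ∑ i ∈ S, p i)) := by
  set f : Finset (Fin n) → ℝ := fun S => ν S - ∑ i ∈ S, p i with hf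
  set m := 2 ^ n with hm
  let E : Finset (Fin n) ≃ Fin m := Fintype.equivFinOfCardEq (card_finset_fin n)
  set w : Fin m → ℝ := fun k => f (E.symm k) with hw
  set σ := Tuple.sort w with hσ
  have hmono : Monotone (w ∘ σ) := Tuple.monotone_sort w
  let e : Fin m ≃ Finset (Fin n) := σ.trans E.symm
  have hfe : f ∘ e = w ∘ σ := rfl
  -- step 1
  have hperm : sortedDeficitVector n ν p = (List.ofFn (w ∘ σ)).reverse := by
    refine (fun h1 h2 h3 => List.Perm.eq_of_pairwise' (r := (· ≥ ·)) h2 h3 h1) ?_ ?_ ?_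
    · rw [← Multiset.coe_eq_coe, Multiset.coe_reverse]
      show (↑(sortedDeficitVector n ν p) : Multiset ℝ) = ↑(List.ofFn (w ∘ σ))
      rw [sortedDeficitVector, Multiset.sort_eq, ← Fin.univ_val_map (w ∘ σ)]
      conv_lhs => rw [← Finset.map_univ_equiv e]
      rw [Finset.map_val, Multiset.map_map]
      rfl
    · exact Multiset.pairwise_sort _ _
    · rw [List.pairwise_reverse, List.pairwise_ofFn]
      intro a b hab
      exact hmono hab.le
  -- step 2
  have hlen : (List.ofFn (w ∘ σ)).reverse.length = m := by simp
  have hget : gD n ν j p = (w ∘ σ) ⟨m - 1 - j, by omega⟩ := by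
    rw [gD, hperm, List.getD_eq_getElem _ _ (by omega), List.getElem_reverse,
      List.getElem_ofFn]
    congr 1
    ext
    simp
  rw [hget, ← minmax_fin m j hj (w ∘ σ) hmono (by
    apply Finset.powersetCard_nonempty.mpr
    rw [Finset.card_univ, Fintype.card_fin]; omega)]
  -- step 3: transfer between Fin m and Finset (Fin n)
  apply le_antisymm
  · apply Finset.sup'_le
    intro A hA
    rw [Finset.mem_powersetCard_univ] at hA
    have hmem : A.map e.toEmbedding ∈
        (Finset.univ : Finset (Finset (Fin n))).powersetCard (j+1) := by
      rw [Finset.mem_powersetCard_univ, Finset.card_map]; exact hA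
    have := Finset.le_sup' (fun T => infD T f) hmem
    rwa [infD_map_equiv e A f, hfe] at this
  · apply Finset.sup'_le
    intro T hT
    rw [Finset.mem_powersetCard_univ] at hT
    have hmem : T.map e.symm.toEmbedding ∈
        (Finset.univ : Finset (Fin m)).powersetCard (j+1) := by
      rw [Finset.mem_powersetCard_univ, Finset.card_map]; exact hT
    have := Finset.le_sup' (fun A => infD A (w ∘ σ)) hmem
    rw [← hfe, infD_map_equiv e.symm T (f ∘ e)] at this
    have heq : (f ∘ ⇑e) ∘ ⇑e.symm = f := by ext S; simp
    rwa [heq] at this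

lemma gD_cont (n : ℕ) (ν : Finset (Fin n) → ℝ) (j : ℕ) : Continuous (gD n ν j) := by
  by_cases hj : j < 2 ^ n
  · have h : gD n ν j = fun p => ((Finset.univ : Finset (Finset (Fin n))).powersetCard
        (j+1)).sup' (powP_nonempty n j hj) (fun T => infD T (fun S => ν S - ∑ i ∈ S, p i)) :=
      funext (gD_eq n ν j hj)
    rw [h, continuous_iff_continuousAt]
    intro x
    apply ContinuousAt.finset_sup'_apply (powP_nonempty n j hj)
    intro T hT
    rw [Finset.mem_powersetCard_univ] at hT
    have hTne : T.Nonempty := Finset.card_pos.mp (by omega)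
    have h2 : (fun p : Fin n → ℝ => infD T (fun S => ν S - ∑ i ∈ S, p i)) =
        fun p => T.inf' hTne (fun S => ν S - ∑ i ∈ S, p i) :=
      funext fun p => infD_pos hTne _
    rw [h2]
    apply ContinuousAt.finset_inf'_apply hTne
    intro S _
    exact (continuous_const.sub (continuous_finset_sum S fun i _ => continuous_apply i)).continuousAt
  · have h : gD n ν j = fun _ => 0 := by
      funext p
      exact List.getD_eq_default _ _ (by rw [sdv_length]; omega)
    rw [h]; exact continuous_const

/-- iterated argmin sets -/
def Kset (n : ℕ) (ν : Finset (Fin n) → ℝ) : ℕ → Set (Fin n → ℝ)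
  | 0 => {p | (∀ i, 0 ≤ p i) ∧ ∑ i, p i = ν Finset.univ}
  | (j+1) => {p ∈ Kset n ν j | ∀ q ∈ Kset n ν j, gD n ν j p ≤ gD n ν j q}

lemma Kset_succ_subset (n : ℕ) (ν : Finset (Fin n) → ℝ) (j : ℕ) :
    Kset n ν (j+1) ⊆ Kset n ν j := fun _ h => h.1

lemma Kset_antitone (n : ℕ) (ν : Finset (Fin n) → ℝ) {a b : ℕ} (h : a ≤ b) :
    Kset n ν b ⊆ Kset n ν a := by
  induction b with
  | zero => simp_all
  | succ k ih =>
    rcases Nat.lt_or_ge a (k+1) with h' | h'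
    · exact (Kset_succ_subset n ν k).trans (ih (by omega))
    · have : a = k + 1 := by omega
      subst this; exact subset_rfl

lemma Kset_zero_compact (n : ℕ) (ν : Finset (Fin n) → ℝ) : IsCompact (Kset n ν 0) := by
  have hclosed : IsClosed (Kset n ν 0) := by
    have h1 : IsClosed {p : Fin n → ℝ | ∀ i, 0 ≤ p i} := by
      rw [Set.setOf_forall]
      exact isClosed_iInter fun i => isClosed_le continuous_const (continuous_apply i)
    have h2 : IsClosed {p : Fin n → ℝ | ∑ i, p i = ν Finset.univ} :=
      isClosed_eq (continuous_finset_sum _ fun i _ => continuous_apply i) continuous_const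
    exact h1.inter h2
  rcases (Set.eq_empty_or_nonempty (Kset n ν 0)) with h | h
  · rw [h]; exact isCompact_empty
  · obtain ⟨q, hq⟩ := h
    have hc : 0 ≤ ν Finset.univ := by
      rw [← hq.2]; exact Finset.sum_nonneg fun i _ => hq.1 i
    apply IsCompact.of_isClosed_subset
      (isCompact_Icc (a := (fun _ => 0 : Fin n → ℝ)) (b := fun _ => ν Finset.univ)) hclosed
    intro p hp
    rw [Set.mem_Icc]
    constructor
    · intro i; exact hp.1 i
    · intro i
      calc p i ≤ ∑ k, p k := Finset.single_le_sum (fun k _ => hp.1 k) (Finset.mem_univ i)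
        _ = ν Finset.univ := hp.2

lemma Kset_compact_nonempty (n : ℕ) (ν : Finset (Fin n) → ℝ)
    (hne : (Kset n ν 0).Nonempty) (j : ℕ) :
    IsCompact (Kset n ν j) ∧ (Kset n ν j).Nonempty := by
  induction j with
  | zero => exact ⟨Kset_zero_compact n ν, hne⟩
  | succ k ih =>
    obtain ⟨hcomp, hnon⟩ := ih
    obtain ⟨z, hz, hmin⟩ := hcomp.exists_isMinOn hnon (gD_cont n ν k).continuousOn
    have hKeq : Kset n ν (k+1) = Kset n ν k ∩ {p | gD n ν k p ≤ gD n ν k z} := by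
      ext p
      constructor
      · rintro ⟨hp, hmin'⟩; exact ⟨hp, hmin' z hz⟩
      · rintro ⟨hp, hle⟩
        exact ⟨hp, fun q hq => le_trans hle (hmin hq)⟩
    constructor
    · rw [hKeq]
      exact hcomp.inter_right (isClosed_le (gD_cont n ν k) continuous_const)
    · exact ⟨z, hz, fun q hq => hmin hq⟩

lemma lex_aux : ∀ (j : ℕ) (l₁ l₂ : List ℝ), ∀ (h₁ : j < l₁.length) (h₂ : j < l₂.length),
    (∀ i, i < j → l₁.getD i 0 = l₂.getD i 0) →
    l₁.getD j 0 < l₂.getD j 0 → List.Lex (· < ·) l₁ l₂ := by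
  intro j
  induction j with
  | zero =>
    intro l₁ l₂ h₁ h₂ _ hlt
    match l₁, l₂ with
    | a :: t₁, b :: t₂ =>
      simp only [List.getD_cons_zero] at hlt
      exact List.Lex.rel hlt
  | succ k ih =>
    intro l₁ l₂ h₁ h₂ hpre hlt
    match l₁, l₂ with
    | a :: t₁, b :: t₂ =>
      have hab : a = b := by simpa using hpre 0 (by omega)
      subst hab
      apply List.Lex.cons
      apply ih t₁ t₂ (by simpa using h₁) (by simpa using h₂)
      · intro i hi
        simpa using hpre (i+1) (by omega)
      · simpa using hlt

/-- For a coalitional game on `n ≥ 1` players (with a nonempty set of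
imputations), there exists an imputation `η` whose nonincreasingly sorted deficit
vector is lexicographically ≤ that of every imputation: the nucleolus is
well-defined. -/
theorem nucleolus_exists
    (n : ℕ) (hn : 1 ≤ n) (ν : Finset (Fin n) → ℝ)
    (hne : ∃ p : Fin n → ℝ, (∀ i, 0 ≤ p i) ∧ ∑ i, p i = ν Finset.univ) :
    ∃ η : Fin n → ℝ, (∀ i, 0 ≤ η i) ∧ (∑ i, η i = ν Finset.univ) ∧
      ∀ x : Fin n → ℝ, (∀ i, 0 ≤ x i) → (∑ i, x i = ν Finset.univ) →
        LexLE (sortedDeficitVector n ν η) (sortedDeficitVector n ν x) := by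
  classical
  set m := 2 ^ n with hm
  have hK0ne : (Kset n ν 0).Nonempty := hne
  obtain ⟨η, hη⟩ := (Kset_compact_nonempty n ν hK0ne m).2
  have hη0 : η ∈ Kset n ν 0 := Kset_antitone n ν (Nat.zero_le m) hη
  refine ⟨η, hη0.1, hη0.2, ?_⟩
  intro x hx1 hx2
  have hx0 : x ∈ Kset n ν 0 := ⟨hx1, hx2⟩
  -- if the first j entries agree, x is in Kset j
  have claim : ∀ j, j ≤ m → (∀ i, i < j → gD n ν i x = gD n ν i η) → x ∈ Kset n ν j := by
    intro j
    induction j with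
    | zero => intro _ _; exact hx0
    | succ k ih =>
      intro hk hpre
      have hxk : x ∈ Kset n ν k := ih (by omega) (fun i hi => hpre i (by omega))
      have hηk1 : η ∈ Kset n ν (k+1) := Kset_antitone n ν hk hη
      refine ⟨hxk, fun q hq => ?_⟩
      rw [hpre k (by omega)]
      exact hηk1.2 q hq
  by_cases hall : ∀ j, j < m → gD n ν j η = gD n ν j x
  · left
    apply List.ext_getElem (by rw [sdv_length, sdv_length])
    intro i h1 h2
    have hi : i < m := by rw [sdv_length] at h1; exact h1
    have := hall i hi
    rwa [gD, gD, List.getD_eq_getElem _ _ h1, List.getD_eq_getElem _ _ h2] at this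
  · right
    push_neg at hall
    have hex : ∃ j, j < m ∧ gD n ν j η ≠ gD n ν j x := hall
    set j := Nat.find hex with hj
    obtain ⟨hjm, hjne⟩ := Nat.find_spec hex
    have hpre : ∀ i, i < j → gD n ν i η = gD n ν i x := by
      intro i hi
      by_contra hc
      exact Nat.find_min hex hi ⟨by omega, hc⟩
    have hxj : x ∈ Kset n ν j := claim j (by omega) (fun i hi => (hpre i hi).symm)
    have hηj1 : η ∈ Kset n ν (j+1) := Kset_antitone n ν (by omega) hη
    have hlt : gD n ν j η < gD n ν j x := lt_of_le_of_ne (hηj1.2 x hxj) hjne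
    exact lex_aux j _ _ (by rw [sdv_length]; omega) (by rw [sdv_length]; omega) hpre hlt
end

section
/- Let ν be a coalitional game on n players. If η and η′ are two imputations each of whose nonincreasingly sorted deficit vectors is lexicographically less than or equal to the nonincreasingly sorted deficit vector of every imputation, then η = η′; i.e. the nucleolus is unique. -/
lemma lexLE_antisymm {a b : List ℝ} (h1 : LexLE a b) (h2 : LexLE b a) : a = b := by
  rcases h1 with h1 | h1
  · exact h1
  rcases h2 with h2 | h2
  · exact h2.symm
  exact absurd h2 (asymm h1)

lemma head_max (s : Multiset ℝ) (hs : s ≠ 0) :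
    ∃ t l, Multiset.sort s (· ≥ ·) = t :: l ∧ ∀ b ∈ s, b ≤ t := by
  rcases hL : Multiset.sort s (· ≥ ·) with _ | ⟨t, l⟩
  · exfalso
    apply hs
    have := Multiset.sort_eq (α := ℝ) s (· ≥ ·)
    rw [hL] at this
    simpa using this.symm
  · refine ⟨t, l, rfl, fun b hb => ?_⟩
    have hb' : b ∈ Multiset.sort (α := ℝ) s (· ≥ ·) := (Multiset.mem_sort ..).mpr hb
    rw [hL] at hb'
    rcases List.mem_cons.mp hb' with h | h
    · exact le_of_eq h
    · have hsorted := Multiset.pairwise_sort (α := ℝ) s (· ≥ ·)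
      rw [hL] at hsorted
      exact List.rel_of_pairwise_cons hsorted h

lemma mid_lexLE (P : Multiset (ℝ × ℝ))
    (h : Multiset.sort (P.map Prod.fst) (· ≥ ·) = Multiset.sort (P.map Prod.snd) (· ≥ ·)) :
    LexLE (Multiset.sort (P.map (fun p => (p.1 + p.2) / 2)) (· ≥ ·))
      (Multiset.sort (P.map Prod.fst) (· ≥ ·)) ∧
    (Multiset.sort (P.map (fun p => (p.1 + p.2) / 2)) (· ≥ ·)
        = Multiset.sort (P.map Prod.fst) (· ≥ ·) → ∀ p ∈ P, p.1 = p.2) := by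
  induction P using Multiset.strongInductionOn with
  | ih P IH =>
  by_cases hP : P = 0
  · subst hP
    simp [LexLE]
  -- heads
  obtain ⟨t, lF, hF, hFmax⟩ := head_max (P.map Prod.fst) (by simpa using hP)
  obtain ⟨u, lM, hM, hMmax⟩ := head_max (P.map (fun p => (p.1 + p.2) / 2)) (by simpa using hP)
  have hSmax : ∀ b ∈ P.map Prod.snd, b ≤ t := by
    obtain ⟨t', lS, hS, hSmax'⟩ := head_max (P.map Prod.snd) (by simpa using hP)
    have : t' = t := by rw [hS, hF] at h; exact (List.cons.injEq _ _ _ _ ▸ h).1.symm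
    exact this ▸ hSmax'
  -- u ≤ t
  have hu : u ∈ P.map (fun p => (p.1 + p.2) / 2) := by
    have : u ∈ Multiset.sort (α := ℝ) (P.map (fun p => (p.1 + p.2) / 2)) (· ≥ ·) := by
      rw [hM]; exact List.mem_cons_self
    exact (Multiset.mem_sort ..).mp this
  obtain ⟨p, hpP, hpu⟩ := Multiset.mem_map.mp hu
  have hp1 : p.1 ≤ t := hFmax _ (Multiset.mem_map_of_mem _ hpP)
  have hp2 : p.2 ≤ t := hSmax _ (Multiset.mem_map_of_mem _ hpP)
  have hut : u ≤ t := by rw [← hpu]; linarith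
  rcases lt_or_eq_of_le hut with hlt | heq
  · constructor
    · right
      rw [hM, hF]
      exact List.Lex.rel hlt
    · intro he
      rw [hM, hF] at he
      exact absurd ((List.cons.injEq _ _ _ _ ▸ he).1 ▸ hlt) (lt_irrefl t)
  · -- u = t, so p.1 = p.2 = t
    have hpt1 : p.1 = t := by rw [← hpu] at heq; linarith
    have hpt2 : p.2 = t := by rw [← hpu] at heq; linarith
    set P' := P.erase p with hP'
    have hcons : p ::ₘ P' = P := Multiset.cons_erase hpP
    have hsub : P' ≤ P := Multiset.erase_le _ _
    have hF'max : ∀ b ∈ P'.map Prod.fst, t ≥ b :=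
      fun b hb => hFmax b (Multiset.mem_of_le (Multiset.map_le_map hsub) hb)
    have hS'max : ∀ b ∈ P'.map Prod.snd, t ≥ b :=
      fun b hb => hSmax b (Multiset.mem_of_le (Multiset.map_le_map hsub) hb)
    have hM'max : ∀ b ∈ P'.map (fun p => (p.1 + p.2) / 2), t ≥ b :=
      fun b hb => heq ▸ hMmax b (Multiset.mem_of_le (Multiset.map_le_map hsub) hb)
    have hFeq : Multiset.sort (P.map Prod.fst) (· ≥ ·)
        = t :: Multiset.sort (P'.map Prod.fst) (· ≥ ·) := by
      rw [← hcons, Multiset.map_cons, hpt1]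
      exact Multiset.sort_cons _ _ _ hF'max
    have hSeq : Multiset.sort (P.map Prod.snd) (· ≥ ·)
        = t :: Multiset.sort (P'.map Prod.snd) (· ≥ ·) := by
      rw [← hcons, Multiset.map_cons, hpt2]
      exact Multiset.sort_cons _ _ _ hS'max
    have hMeq : Multiset.sort (P.map (fun p => (p.1 + p.2) / 2)) (· ≥ ·)
        = t :: Multiset.sort (P'.map (fun p => (p.1 + p.2) / 2)) (· ≥ ·) := by
      rw [← hcons, Multiset.map_cons]
      have : (p.1 + p.2) / 2 = t := by rw [hpt1, hpt2]; ring
      rw [this]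
      exact Multiset.sort_cons _ _ _ hM'max
    have h' : Multiset.sort (P'.map Prod.fst) (· ≥ ·)
        = Multiset.sort (P'.map Prod.snd) (· ≥ ·) := by
      rw [hFeq, hSeq] at h
      exact (List.cons.injEq _ _ _ _ ▸ h).2
    have hlt' : P' < P := by
      rw [← hcons]; exact Multiset.lt_cons_self _ _
    obtain ⟨ihle, iheq⟩ := IH P' hlt' h'
    constructor
    · rcases ihle with e | lx
      · left; rw [hMeq, hFeq, e]
      · right; rw [hMeq, hFeq]; exact List.Lex.cons lx
    · intro he q hq
      rw [hMeq, hFeq] at he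
      have htails := (List.cons.injEq _ _ _ _ ▸ he).2
      rw [← hcons] at hq
      rcases Multiset.mem_cons.mp hq with rfl | hq'
      · rw [hpt1, hpt2]
      · exact iheq htails q hq'

/-- If `η` and `η'` are imputations whose nonincreasingly sorted deficit
vectors are both lexicographically ≤ that of every imputation, then `η = η'`:
the nucleolus is unique. -/
theorem nucleolus_unique
    (n : ℕ) (ν : Finset (Fin n) → ℝ)
    (η η' : Fin n → ℝ)
    (hηpos : ∀ i, 0 ≤ η i) (hηsum : ∑ i, η i = ν Finset.univ)
    (hη'pos : ∀ i, 0 ≤ η' i) (hη'sum : ∑ i, η' i = ν Finset.univ)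
    (hlex : ∀ x : Fin n → ℝ, (∀ i, 0 ≤ x i) → (∑ i, x i = ν Finset.univ) →
      LexLE (sortedDeficitVector n ν η) (sortedDeficitVector n ν x))
    (hlex' : ∀ x : Fin n → ℝ, (∀ i, 0 ≤ x i) → (∑ i, x i = ν Finset.univ) →
      LexLE (sortedDeficitVector n ν η') (sortedDeficitVector n ν x)) :
    η = η' := by
  have hee' : sortedDeficitVector n ν η = sortedDeficitVector n ν η' :=
    lexLE_antisymm (hlex η' hη'pos hη'sum) (hlex' η hηpos hηsum)
  set x : Fin n → ℝ := fun i => (η i + η' i) / 2 with hx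
  have hxpos : ∀ i, 0 ≤ x i := fun i => by
    have := hηpos i; have := hη'pos i
    simp only [hx]; positivity
  have hxsum : ∑ i, x i = ν Finset.univ := by
    simp only [hx]
    rw [← Finset.sum_div, Finset.sum_add_distrib, hηsum, hη'sum, add_self_div_two]
  set P : Multiset (ℝ × ℝ) :=
    (Finset.univ.val : Multiset (Finset (Fin n))).map
      (fun S => (ν S - ∑ i ∈ S, η i, ν S - ∑ i ∈ S, η' i)) with hPdef
  have hPfst : P.map Prod.fst
      = (Finset.univ.val : Multiset (Finset (Fin n))).map (fun S => ν S - ∑ i ∈ S, η i) := by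
    rw [hPdef, Multiset.map_map]; rfl
  have hPsnd : P.map Prod.snd
      = (Finset.univ.val : Multiset (Finset (Fin n))).map (fun S => ν S - ∑ i ∈ S, η' i) := by
    rw [hPdef, Multiset.map_map]; rfl
  have hPmid : P.map (fun p => (p.1 + p.2) / 2)
      = (Finset.univ.val : Multiset (Finset (Fin n))).map (fun S => ν S - ∑ i ∈ S, x i) := by
    rw [hPdef, Multiset.map_map]
    apply Multiset.map_congr rfl
    intro S _
    simp only [Function.comp_apply, hx]
    rw [← Finset.sum_div, Finset.sum_add_distrib]
    ring
  have hkey := mid_lexLE P (by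
    rw [hPfst, hPsnd]
    exact hee')
  have h1 : LexLE (sortedDeficitVector n ν x) (sortedDeficitVector n ν η) := by
    have := hkey.1
    rw [hPfst, hPmid] at this
    exact this
  have h2 : LexLE (sortedDeficitVector n ν η) (sortedDeficitVector n ν x) :=
    hlex x hxpos hxsum
  have heqv : sortedDeficitVector n ν x = sortedDeficitVector n ν η :=
    lexLE_antisymm h1 h2
  have hall : ∀ p ∈ P, p.1 = p.2 := by
    apply hkey.2
    rw [hPfst, hPmid]
    exact heqv
  funext i
  have hmem : ((ν {i} - ∑ j ∈ ({i} : Finset (Fin n)), η j,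
      ν {i} - ∑ j ∈ ({i} : Finset (Fin n)), η' j) : ℝ × ℝ) ∈ P := by
    rw [hPdef]
    exact Multiset.mem_map_of_mem _ (Finset.mem_univ_val _)
  have := hall _ hmem
  simp only [Finset.sum_singleton] at this
  linarith
end
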